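/- Over GF(2), define polynomials c_k by c_{-1} = 0, c_0 = 1, c_1 = (x+1)·c_0 + c_{-1} = x+1, and c_k = x·c_{k-1} + c_{k-2} for k ≥ 2 (so the quotients in the continued-fraction/Euclidean expansion are q_1 = x+1 and q_k = x for k ≥ 2). Let φ^(k) = f^(2k-1)(x,1) arising from the parity recursion f^(0)=x+z, g^(0)=z, (f^(j+1),g^(j+1)) = (f^(j), z g^(j)) if j even and (x f^(j)+g^(j), z f^(j)) if j odd. Then c_k = φ^(k) for all k ≥ 1. -/
import Mathlib


theorem stmt19 (f g : ℕ → MvPolynomial (Fin 2) (ZMod 2))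
    (hf0 : f 0 = MvPolynomial.X 0 + MvPolynomial.X 1)
    (hg0 : g 0 = MvPolynomial.X 1)
    (heven : ∀ k, Even k →
      f (k + 1) = f k ∧ g (k + 1) = MvPolynomial.X 1 * g k)
    (hodd : ∀ k, ¬ Even k →
      f (k + 1) = MvPolynomial.X 0 * f k + g k ∧ g (k + 1) = MvPolynomial.X 1 * f k)
    (c : ℕ → Polynomial (ZMod 2))
    (hc0 : c 0 = 1) (hc1 : c 1 = Polynomial.X + 1)
    (hcrec : ∀ k, 2 ≤ k → c k = Polynomial.X * c (k - 1) + c (k - 2)) :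
    ∀ k, 1 ≤ k →
      c k = MvPolynomial.aeval ![Polynomial.X, 1] (f (2 * k - 1)) := by
  set A : MvPolynomial (Fin 2) (ZMod 2) →ₐ[ZMod 2] Polynomial (ZMod 2) :=
    MvPolynomial.aeval ![Polynomial.X, 1] with hA
  have hAX0 : A (MvPolynomial.X 0) = Polynomial.X := by simp [hA]
  have hAX1 : A (MvPolynomial.X 1) = 1 := by simp [hA]
  have key : ∀ k, 1 ≤ k → f (2*k + 3) =
      MvPolynomial.X 0 * f (2*k+1) +
        MvPolynomial.X 1 * (MvPolynomial.X 1 * f (2*k-1)) := by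
    intro k hk
    have h1 := (heven (2*k+2) ⟨k+1, by ring⟩).1
    have h2 := (hodd (2*k+1) (by simp [Nat.even_add_one, Nat.not_even_iff_odd])).1
    have h3 := (heven (2*k) ⟨k, by ring⟩).2
    have h4 := (hodd (2*k-1) (by rw [Nat.not_even_iff_odd]; exact ⟨k-1, by omega⟩)).2
    have e1 : 2*k - 1 + 1 = 2*k := by omega
    rw [e1] at h4
    calc f (2*k+3) = f (2*k+2) := h1
      _ = MvPolynomial.X 0 * f (2*k+1) + g (2*k+1) := h2
      _ = _ := by rw [h3, h4]
  have hf1 : f 1 = f 0 := (heven 0 Even.zero).1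
  have hg1 : g 1 = MvPolynomial.X 1 * g 0 := (heven 0 Even.zero).2
  have hf2 : f 2 = MvPolynomial.X 0 * f 1 + g 1 :=
    (hodd 1 (by simp [Nat.not_even_iff_odd])).1
  have hf3 : f 3 = f 2 := (heven 2 ⟨1, by ring⟩).1
  have base1 : c 1 = A (f 1) := by
    rw [hc1, hf1, hf0]; simp [hAX0, hAX1]
  have base2 : c 2 = A (f 3) := by
    have h2 := hcrec 2 (le_refl 2)
    rw [h2, hf3, hf2, hf1, hg1, hg0, hf0]
    simp only [map_add, map_mul, hAX0, hAX1, hc0, hc1]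
    ring
  have main : ∀ k : ℕ, c (k+1) = A (f (2*(k+1) - 1)) ∧ c (k+2) = A (f (2*(k+2) - 1)) := by
    intro k
    induction k with
    | zero => exact ⟨base1, base2⟩
    | succ n ih =>
      refine ⟨ih.2, ?_⟩
      have hk := key (n+1) (by omega)
      have hc := hcrec (n+3) (by omega)
      have e1 : 2*(n+3) - 1 = 2*(n+1)+3 := by omega
      have e2 : 2*(n+1)+1 = 2*(n+2) - 1 := by omega
      have e3 : 2*(n+1)-1 = 2*(n+1) - 1 := rfl
      rw [show n+2+1 = n+3 from rfl] at *
      rw [hc, e1, hk, e2]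
      simp only [map_add, map_mul, hAX0, hAX1]
      have h1 := ih.1
      have h2 := ih.2
      rw [show n+3-1 = n+2 from rfl, show n+3-2 = n+1 from rfl, h1, h2]
      ring
  intro k hk
  obtain ⟨m, rfl⟩ : ∃ m, k = m + 1 := ⟨k - 1, by omega⟩
  exact (main m).1
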